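/- For every real number δ with -1/2 ≤ δ ≤ 1/2, the binary entropy satisfies H(1/2 + δ) ≤ √(1 - 4δ²), where H(p) = -p·log₂ p - (1-p)·log₂(1-p) (with the convention 0·log₂ 0 = 0). -/

import Mathlib

/-- Binary entropy in bits, with the convention `0 * logb 2 0 = 0`. -/
noncomputable def binH (p : ℝ) : ℝ := -(p * Real.logb 2 p) - (1 - p) * Real.logb 2 (1 - p)

lemma log_le_half_sub {y : ℝ} (hy : 1 ≤ y) : Real.log y ≤ (y - 1/y)/2 := by
  have hy0 : (0:ℝ) < y := lt_of_lt_of_le one_pos hy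
  set u := (y - 1/y)/2 with hu
  have h2 : 2*u*y = y^2 - 1 := by rw [hu]; field_simp
  have hu0 : 0 ≤ u := by nlinarith
  have hexp : 1 + u + u^2/2 ≤ Real.exp u := Real.quadratic_le_exp_of_nonneg hu0
  have hyle : y ≤ Real.exp u := by nlinarith [sq_nonneg ((y-1)^2), sq_nonneg (y-1), sq_nonneg y]
  calc Real.log y ≤ Real.log (Real.exp u) := Real.log_le_log hy0 hyle
    _ = u := Real.log_exp u

lemma neg_mul_log_le {x : ℝ} (hx : 0 < x) (hx1 : x ≤ 1) :
    -(x * Real.log x) ≤ Real.sqrt x * (1 - x) := by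
  set s := Real.sqrt x with hs
  have hs0 : 0 < s := Real.sqrt_pos.2 hx
  have hs2 : s^2 = x := Real.sq_sqrt hx.le
  have hs1 : s ≤ 1 := by nlinarith
  have hy : (1:ℝ) ≤ 1/s := by rw [le_div_iff₀ hs0]; linarith
  have h1 : Real.log (1/s) ≤ (1/s - 1/(1/s))/2 := log_le_half_sub hy
  have h2 : Real.log (1/s) = -Real.log s := by rw [one_div, Real.log_inv]
  have h3 : Real.log x = 2 * Real.log s := by
    rw [← hs2, Real.log_pow]; push_cast; ring
  have h4 : 1/(1/s) = s := by field_simp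
  rw [h2, h4] at h1
  have h5 : -Real.log s * (2*s^2) ≤ ((1/s - s)/2) * (2*s^2) := by
    apply mul_le_mul_of_nonneg_right (by linarith) (by positivity)
  have h6 : ((1/s - s)/2) * (2*s^2) = s * (1 - s^2) := by field_simp
  rw [h3, ← hs2]
  nlinarith [h5, h6]

set_option maxHeartbeats 1000000 in
lemma binH_caseB (δ : ℝ) (h0 : 0 ≤ δ) (h5 : δ ≤ 1/5) :
    binH (1/2 + δ) ≤ Real.sqrt (1 - 4 * δ^2) := by
  have hL0 := Real.log_two_gt_d9
  have hL1 := Real.log_two_lt_d9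
  have hLpos : (0:ℝ) < Real.log 2 := by linarith
  obtain ⟨t, ht⟩ : ∃ t : ℝ, t = 2*δ := ⟨2*δ, rfl⟩
  have ht0 : 0 ≤ t := by linarith
  have ht5 : t ≤ 2/5 := by linarith
  have habs : |t| < 1 := by rw [abs_of_nonneg ht0]; linarith
  have habs' : |(-t)| < 1 := by rwa [abs_neg]
  have hA := Real.abs_log_sub_add_sum_range_le habs 4
  have hB := Real.abs_log_sub_add_sum_range_le habs' 4
  simp only [Finset.sum_range_succ, Finset.sum_range_zero] at hA hB
  rw [abs_of_nonneg ht0] at hA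
  rw [abs_neg, abs_of_nonneg ht0] at hB
  norm_num at hA hB
  have h1t : (0:ℝ) < 1 - t := by linarith
  have h1t' : (0:ℝ) ≤ 1 + t := by linarith
  have hE : t^5/(1-t) ≤ (2/3) * t^4 := by
    rw [div_le_iff₀ h1t]; nlinarith [pow_nonneg ht0 4]
  have hlm : Real.log (1-t) ≥ -(t + t^2/2 + t^3/3 + t^4/4) - t^5/(1-t) := by
    have := (abs_le.1 hA).1; linarith
  have hlp : Real.log (1+t) ≥ (t - t^2/2 + t^3/3 - t^4/4) - t^5/(1-t) := by
    have := (abs_le.1 hB).1; linarith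
  -- φ lower bound
  obtain ⟨φ, hφdef⟩ : ∃ φ : ℝ, φ = (1+t) * Real.log (1+t) + (1-t) * Real.log (1-t) := ⟨_, rfl⟩
  have hφ : φ ≥ t^2 + t^4/6 - 2*(t^5/(1-t)) := by
    have hm1 := mul_le_mul_of_nonneg_left hlp h1t'
    have hm2 := mul_le_mul_of_nonneg_left hlm h1t.le
    have : (1+t)*((t - t^2/2 + t^3/3 - t^4/4) - t^5/(1-t))
         + (1-t)*(-(t + t^2/2 + t^3/3 + t^4/4) - t^5/(1-t))
         = t^2 + t^4/6 - 2*(t^5/(1-t)) := by ring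
    rw [hφdef]; nlinarith [hm1, hm2]
  have htsq0 : (0:ℝ) ≤ t^2 := sq_nonneg t
  have ht2' : t^2 ≤ 4/25 := by
    rw [sq]
    calc t*t ≤ (2/5)*(2/5) := mul_le_mul ht5 ht5 ht0 (by norm_num)
      _ = 4/25 := by norm_num
  have ht4' : t^4 ≤ (4/25)*t^2 := by
    calc t^4 = t^2*t^2 := by ring
      _ ≤ (4/25)*t^2 := mul_le_mul_of_nonneg_right ht2' htsq0
  have hLt2 : Real.log 2 * t^2 ≤ 0.6931471808 * t^2 :=
    mul_le_mul_of_nonneg_right Real.log_two_lt_d9.le htsq0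
  have hφ2 : φ ≥ (7/6) * Real.log 2 * t^2 := by
    have h76 : (7/6) * Real.log 2 * t^2 = (7/6) * (Real.log 2 * t^2) := by ring
    rw [h76]
    linarith [hφ, hE, ht4', hLt2]
  -- relation binH * log 2 = log 2 - φ/2
  have hp : (1:ℝ)/2 + δ = (1+t)/2 := by rw [ht]; ring
  have hq : (1:ℝ) - (1/2 + δ) = (1-t)/2 := by rw [ht]; ring
  have hlogp : Real.log (1/2 + δ) = Real.log (1+t) - Real.log 2 := by
    rw [hp, Real.log_div (by linarith) two_ne_zero]
  have hlogq : Real.log (1 - (1/2 + δ)) = Real.log (1-t) - Real.log 2 := by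
    rw [hq, Real.log_div (by linarith) two_ne_zero]
  have hrel : binH (1/2 + δ) * Real.log 2 = Real.log 2 - φ/2 := by
    unfold binH
    rw [Real.logb, Real.logb, hlogp, hlogq, hφdef, hp]
    field_simp
    ring
  -- binH ≤ 1 - (7/12) t^2
  have hbin : binH (1/2 + δ) ≤ 1 - (7/12)*t^2 := by
    have hml : binH (1/2 + δ) * Real.log 2 ≤ (1 - (7/12)*t^2) * Real.log 2 := by
      rw [hrel]
      have expand : (1 - (7/12)*t^2) * Real.log 2 = Real.log 2 - (1/2) * ((7/6) * Real.log 2 * t^2) := by ring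
      rw [expand]; linarith
    exact le_of_mul_le_mul_right hml hLpos
  have htsq : (0:ℝ) ≤ t^2 := sq_nonneg t
  have ht2 : t^2 ≤ 4/25 := by
    rw [sq]
    calc t*t ≤ (2/5)*(2/5) := mul_le_mul ht5 ht5 ht0 (by norm_num)
      _ = 4/25 := by norm_num
  have ht4 : t^4 ≤ (4/25)*t^2 := by
    calc t^4 = t^2*t^2 := by ring
      _ ≤ (4/25)*t^2 := mul_le_mul_of_nonneg_right ht2 htsq
  have hfin : 1 - (7/12)*t^2 ≤ Real.sqrt (1 - t^2) := by
    have hnn : (0:ℝ) ≤ 1 - (7/12)*t^2 := by linarith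
    rw [Real.le_sqrt hnn (by linarith)]
    have hexp2 : (1 - (7/12)*t^2)^2 = 1 - (7/6)*t^2 + (49/144)*t^4 := by ring
    rw [hexp2]; linarith
  have hteq : (1:ℝ) - 4*δ^2 = 1 - t^2 := by rw [ht]; ring
  rw [hteq]
  linarith

set_option maxHeartbeats 1000000 in
lemma binH_caseA (δ : ℝ) (h5 : 1/5 ≤ δ) (h2 : δ ≤ 1/2) :
    binH (1/2 + δ) ≤ Real.sqrt (1 - 4 * δ^2) := by
  rcases eq_or_lt_of_le h2 with heq | hlt
  · -- δ = 1/2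
    subst heq
    have e1 : (1:ℝ)/2 + 1/2 = 1 := by norm_num
    have e2 : (1:ℝ) - 4*(1/2:ℝ)^2 = 0 := by norm_num
    rw [e1, e2, Real.sqrt_zero]
    unfold binH
    norm_num
  · have hLpos : (0:ℝ) < Real.log 2 := Real.log_pos (by norm_num)
    obtain ⟨p, hpd⟩ : ∃ p : ℝ, p = 1/2 + δ := ⟨_, rfl⟩
    obtain ⟨q, hqd⟩ : ∃ q : ℝ, q = 1/2 - δ := ⟨_, rfl⟩
    have hp0 : 0 < p := by rw [hpd]; linarith
    have hq0 : 0 < q := by rw [hqd]; linarith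
    have hp1 : p ≤ 1 := by rw [hpd]; linarith
    have hq1 : q ≤ 1 := by rw [hqd]; linarith
    have hpq1 : p + q = 1 := by rw [hpd, hqd]; ring
    have hpq : p * q ≤ 21/100 := by rw [hpd, hqd]; nlinarith
    obtain ⟨sp, hsp⟩ : ∃ s : ℝ, s = Real.sqrt p := ⟨_, rfl⟩
    obtain ⟨sq', hsq⟩ : ∃ s : ℝ, s = Real.sqrt q := ⟨_, rfl⟩
    have hsp0 : 0 ≤ sp := by rw [hsp]; exact Real.sqrt_nonneg p
    have hsq0 : 0 ≤ sq' := by rw [hsq]; exact Real.sqrt_nonneg q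
    have hsp2 : sp^2 = p := by rw [hsp]; exact Real.sq_sqrt hp0.le
    have hsq2 : sq'^2 = q := by rw [hsq]; exact Real.sq_sqrt hq0.le
    -- sqrt p + sqrt q ≤ 2 log 2
    have hsum : sp + sq' ≤ 2 * Real.log 2 := by
      have hL := Real.log_two_gt_d9
      nlinarith [sq_nonneg (sp * sq' - 4583/10000), sq_nonneg (sp + sq'), mul_nonneg hsp0 hsq0]
    -- entropy bounds
    have key1 : -(p * Real.log p) ≤ sp * q := by
      have := neg_mul_log_le hp0 hp1
      rw [← hsp] at this
      nlinarith [this]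
    have key2 : -(q * Real.log q) ≤ sq' * p := by
      have := neg_mul_log_le hq0 hq1
      rw [← hsq] at this
      nlinarith [this]
    -- sqrt of target
    have htar : Real.sqrt (1 - 4*δ^2) = 2 * (sp * sq') := by
      have h4pq : (1:ℝ) - 4*δ^2 = (2*(sp*sq'))^2 := by
        have : (2*(sp*sq'))^2 = 4 * (sp^2 * sq'^2) := by ring
        rw [this, hsp2, hsq2, hpd, hqd]; ring
      rw [h4pq]
      exact Real.sqrt_sq (by positivity)
    rw [htar]
    -- binH expression
    have hq' : (1:ℝ) - (1/2 + δ) = q := by rw [hqd]; ring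
    have hrel : binH (1/2 + δ) * Real.log 2 = -(p * Real.log p) - q * Real.log q := by
      unfold binH
      rw [hq', ← hpd, Real.logb, Real.logb]
      field_simp
    have hmain : -(p * Real.log p) - q * Real.log q ≤ (2 * (sp * sq')) * Real.log 2 := by
      have e1 : sp * q = sp * sq' * sq' := by rw [← hsq2]; ring
      have e2 : sq' * p = sp * sq' * sp := by rw [← hsp2]; ring
      have e3 : sp * q + sq' * p = (sp*sq') * (sp + sq') := by rw [e1, e2]; ring
      have e4 : (sp*sq') * (sp + sq') ≤ (sp*sq') * (2 * Real.log 2) :=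
        mul_le_mul_of_nonneg_left hsum (mul_nonneg hsp0 hsq0)
      nlinarith [key1, key2]
    have := hmain
    rw [← hrel] at this
    exact le_of_mul_le_mul_right this hLpos

lemma binH_symm (p : ℝ) : binH (1 - p) = binH p := by
  unfold binH
  rw [sub_sub_cancel]
  ring

lemma binH_main_nonneg (δ : ℝ) (h0 : 0 ≤ δ) (h2 : δ ≤ 1/2) :
    binH (1/2 + δ) ≤ Real.sqrt (1 - 4 * δ^2) := by
  rcases le_total δ (1/5) with hc | hc
  · exact binH_caseB δ h0 hc
  · exact binH_caseA δ hc h2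

theorem binH_le_sqrt (δ : ℝ) (h1 : -(1/2) ≤ δ) (h2 : δ ≤ 1/2) :
    binH (1/2 + δ) ≤ Real.sqrt (1 - 4 * δ^2) := by
  rcases le_total 0 δ with h0 | h0
  · exact binH_main_nonneg δ h0 h2
  · have hb : binH (1/2 + δ) = binH (1/2 + (-δ)) := by
      rw [show (1:ℝ)/2 + δ = 1 - (1/2 + (-δ)) by ring, binH_symm]
    rw [hb, show (1:ℝ) - 4*δ^2 = 1 - 4*(-δ)^2 by ring]
    exact binH_main_nonneg (-δ) (by linarith) (by linarith)
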